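/- For integers d ≥ 2 and n ≥ d + 1, there exists a finite simple graph G on n vertices with diameter exactly d whose number of edges equals d + (n - d - 1)(n - d + 4)/2; namely, take a path P with d+1 vertices v_0, v_1, ..., v_d, make the remaining n - d - 1 vertices pairwise adjacent, and join each of them to the three vertices v_0, v_1, v_2 of P. This graph has diameter d and exactly d + (n - d - 1)(n - d + 4)/2 edges. -/

import Mathlib

/-- The extremal graph on `Fin n`: the vertices `0, 1, ..., d` form a path
`v_0 v_1 ⋯ v_d`, the remaining `n - d - 1` vertices are pairwise adjacent,
and each of them is joined to the three vertices `v_0, v_1, v_2` of the path. -/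
def oreExtremalGraph (n d : ℕ) : SimpleGraph (Fin n) where
  Adj a b := a ≠ b ∧
    ((a.val + 1 = b.val ∧ b.val ≤ d) ∨ (b.val + 1 = a.val ∧ a.val ≤ d) ∨
     (d < a.val ∧ d < b.val) ∨
     (d < a.val ∧ b.val ≤ 2) ∨ (d < b.val ∧ a.val ≤ 2))
  symm := by
    constructor
    intro a b h
    exact ⟨h.1.symm, by tauto⟩
  loopless := by
    constructor
    intro a h
    exact h.1 rfl

instance (n d : ℕ) : DecidableRel (oreExtremalGraph n d).Adj :=
  fun _ _ => instDecidableAnd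

namespace OreAux

open Finset SimpleGraph

variable {n d : ℕ}

lemma adj_val {a b : Fin n} (h : a.val ≠ b.val)
    (h2 : (a.val + 1 = b.val ∧ b.val ≤ d) ∨ (b.val + 1 = a.val ∧ a.val ≤ d) ∨
     (d < a.val ∧ d < b.val) ∨
     (d < a.val ∧ b.val ≤ 2) ∨ (d < b.val ∧ a.val ≤ 2)) :
    (oreExtremalGraph n d).Adj a b :=
  ⟨fun hh => h (by rw [hh]), h2⟩

lemma walk_path (k : ℕ) : ∀ i j : Fin n, i.val + k = j.val → j.val ≤ d →
    ∃ w : (oreExtremalGraph n d).Walk i j, w.length = k := by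
  induction k with
  | zero =>
    intro i j h _
    obtain rfl : i = j := Fin.ext (by omega)
    exact ⟨.nil, rfl⟩
  | succ k ih =>
    intro i j h hj
    have hj' : j.val < n := j.isLt
    have hi1 : i.val + 1 < n := by omega
    have hadj : (oreExtremalGraph n d).Adj i ⟨i.val + 1, hi1⟩ :=
      adj_val (by simp) (Or.inl ⟨rfl, show i.val + 1 ≤ d by omega⟩)
    obtain ⟨w, hw⟩ := ih ⟨i.val + 1, hi1⟩ j (show i.val + 1 + k = j.val by omega) hj
    exact ⟨.cons hadj w, by simp [hw]⟩

lemma exists_walk_le (hd : 2 ≤ d) (hn : d + 1 ≤ n) (u v : Fin n) :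
    ∃ w : (oreExtremalGraph n d).Walk u v, w.length ≤ d := by
  -- helper for the mixed case (u in clique, v on path)
  have mixed : ∀ u v : Fin n, d < u.val → v.val ≤ d →
      ∃ w : (oreExtremalGraph n d).Walk u v, w.length ≤ d := by
    intro u v hu hv
    by_cases h2 : v.val ≤ 2
    · have hadj : (oreExtremalGraph n d).Adj u v := adj_val (by omega) (by tauto)
      exact ⟨.cons hadj .nil, by simp; omega⟩
    · have h2n : (2 : ℕ) < n := by omega
      have hadj : (oreExtremalGraph n d).Adj u ⟨2, h2n⟩ := adj_val (by simp; omega) (by simp; omega)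
      obtain ⟨w, hw⟩ := walk_path (k := v.val - 2) (d := d) ⟨2, h2n⟩ v (show 2 + (v.val - 2) = v.val by omega) hv
      refine ⟨.cons hadj w, ?_⟩
      rw [SimpleGraph.Walk.length_cons, hw]
      omega
  rcases le_or_gt u.val d with hu | hu <;> rcases le_or_gt v.val d with hv | hv
  · rcases le_or_gt u.val v.val with h | h
    · obtain ⟨w, hw⟩ := walk_path (k := v.val - u.val) (d := d) u v (by omega) hv
      exact ⟨w, by omega⟩
    · obtain ⟨w, hw⟩ := walk_path (k := u.val - v.val) (d := d) v u (by omega) hu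
      exact ⟨w.reverse, by simp [hw]; omega⟩
  · obtain ⟨w, hw⟩ := mixed v u hv hu
    exact ⟨w.reverse, by simpa using hw⟩
  · exact mixed u v hu hv
  · by_cases huv : u = v
    · subst huv; exact ⟨.nil, by simp⟩
    · have hadj : (oreExtremalGraph n d).Adj u v :=
        adj_val (fun h => huv (Fin.ext h)) (by tauto)
      exact ⟨.cons hadj .nil, by simp; omega⟩

/-- potential function used for the lower bound on the distance from `v_0` to `v_d`. -/
def pot (d : ℕ) (v : Fin n) : ℕ := if v.val ≤ d then v.val else 1

lemma pot_adj (hd : 2 ≤ d) {a b : Fin n} (h : (oreExtremalGraph n d).Adj a b) :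
    pot d b ≤ pot d a + 1 := by
  obtain ⟨-, h2⟩ := h
  unfold pot
  split <;> split <;> rcases h2 with ⟨h,h'⟩|⟨h,h'⟩|⟨h,h'⟩|⟨h,h'⟩|⟨h,h'⟩ <;> omega

lemma pot_walk (hd : 2 ≤ d) {a b : Fin n} (w : (oreExtremalGraph n d).Walk a b) :
    pot d b ≤ pot d a + w.length := by
  induction w with
  | nil => simp
  | cons h w ih =>
    have := pot_adj hd h
    simp only [SimpleGraph.Walk.length_cons]
    omega

lemma walk_ge (hd : 2 ≤ d) {a b : Fin n} (ha : a.val = 0) (hb : b.val = d)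
    (w : (oreExtremalGraph n d).Walk a b) : d ≤ w.length := by
  have h := pot_walk hd w
  unfold pot at h
  split_ifs at h <;> omega

lemma ediam_eq (hd : 2 ≤ d) (hn : d + 1 ≤ n) : (oreExtremalGraph n d).ediam = d := by
  apply le_antisymm
  · apply SimpleGraph.ediam_le_of_edist_le
    intro u v
    obtain ⟨w, hw⟩ := exists_walk_le hd hn u v
    exact le_trans (SimpleGraph.edist_le w) (by exact_mod_cast Nat.cast_le.mpr hw)
  · have hlow : (d : ℕ∞) ≤ (oreExtremalGraph n d).edist ⟨0, by omega⟩ ⟨d, by omega⟩ := by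
      rw [SimpleGraph.edist_eq_sInf]
      apply le_sInf
      rintro b ⟨w, rfl⟩
      exact_mod_cast Nat.cast_le.mpr (walk_ge hd rfl rfl w)
    exact le_trans hlow SimpleGraph.edist_le_ediam

lemma connected (hd : 2 ≤ d) (hn : d + 1 ≤ n) : (oreExtremalGraph n d).Connected := by
  rw [SimpleGraph.connected_iff]
  refine ⟨fun u v => ?_, ⟨⟨0, by omega⟩⟩⟩
  obtain ⟨w, -⟩ := exists_walk_le hd hn u v
  exact ⟨w⟩

/-! ### Counting edges -/

lemma card_filter_val (p : ℕ → Prop) [DecidablePred p] :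
    (Finset.univ.filter fun u : Fin n => p u.val).card = ((Finset.range n).filter p).card := by
  apply Finset.card_bij (fun u _ => u.val)
  · intro a ha
    simp only [mem_filter, mem_univ, true_and] at ha
    simp [a.isLt, ha]
  · intro a _ b _ h
    exact Fin.ext h
  · intro b hb
    simp only [mem_filter, mem_range] at hb
    exact ⟨⟨b, hb.1⟩, by simp [hb.2], rfl⟩

lemma degree_clique (v : Fin n) (hv : d < v.val) (hd : 2 ≤ d) (hn : d + 1 ≤ n) :
    (oreExtremalGraph n d).degree v = (n - d - 1) + 2 := by
  classical
  have hset : (oreExtremalGraph n d).neighborFinset v =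
      (Finset.univ.filter fun u : Fin n => d < u.val ∨ u.val ≤ 2).erase v := by
    ext u
    simp only [SimpleGraph.mem_neighborFinset, Finset.mem_erase, mem_filter, mem_univ, true_and]
    constructor
    · rintro ⟨hne, h2⟩
      have hval : v.val ≠ u.val := fun h => hne (Fin.ext h)
      refine ⟨fun h => hne h.symm, ?_⟩
      rcases h2 with ⟨h,h'⟩|⟨h,h'⟩|⟨h,h'⟩|⟨h,h'⟩|⟨h,h'⟩ <;> omega
    · rintro ⟨hne, h2⟩
      have hval : u.val ≠ v.val := fun h => hne (Fin.ext h)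
      exact adj_val (by omega) (by rcases h2 with h|h <;> omega)
  have hmem : v ∈ (Finset.univ.filter fun u : Fin n => d < u.val ∨ u.val ≤ 2) := by simp [hv]
  rw [SimpleGraph.degree, hset, Finset.card_erase_of_mem hmem,
    card_filter_val (fun u => d < u ∨ u ≤ 2)]
  have : ((Finset.range n).filter fun u => d < u ∨ u ≤ 2) =
      ((Finset.range n) \ Finset.range (d+1)) ∪ Finset.range 3 := by
    ext u; simp; omega
  rw [this, Finset.card_union_of_disjoint (by simp [Finset.disjoint_left]; omega),
    Finset.card_sdiff_of_subset (by intro x; simp; omega)]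
  simp only [Finset.card_range]
  omega

lemma degree_path (v : Fin n) (hv : v.val ≤ d) (hd : 2 ≤ d) (hn : d + 1 ≤ n) :
    (oreExtremalGraph n d).degree v =
      (if v.val + 1 ≤ d then 1 else 0) + (if 1 ≤ v.val then 1 else 0) +
      (if v.val ≤ 2 then n - d - 1 else 0) := by
  classical
  have hset : (oreExtremalGraph n d).neighborFinset v =
      Finset.univ.filter fun u : Fin n =>
        (u.val = v.val + 1 ∧ u.val ≤ d) ∨ (u.val + 1 = v.val) ∨ (d < u.val ∧ v.val ≤ 2) := by
    ext u
    simp only [SimpleGraph.mem_neighborFinset, mem_filter, mem_univ, true_and]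
    constructor
    · rintro ⟨hne, h2⟩
      have hval : v.val ≠ u.val := fun h => hne (Fin.ext h)
      rcases h2 with ⟨h,h'⟩|⟨h,h'⟩|⟨h,h'⟩|⟨h,h'⟩|⟨h,h'⟩ <;> omega
    · intro h2
      refine adj_val (by omega) (by omega)
  rw [SimpleGraph.degree, hset,
    card_filter_val (fun u => (u = v.val + 1 ∧ u ≤ d) ∨ (u + 1 = v.val) ∨ (d < u ∧ v.val ≤ 2))]
  have hsplit : ((Finset.range n).filter fun u =>
      (u = v.val + 1 ∧ u ≤ d) ∨ (u + 1 = v.val) ∨ (d < u ∧ v.val ≤ 2)) =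
      ((Finset.range n).filter fun u => u = v.val + 1 ∧ u ≤ d) ∪
      (((Finset.range n).filter fun u => u + 1 = v.val) ∪
       ((Finset.range n).filter fun u => d < u ∧ v.val ≤ 2)) := by
    simp [Finset.filter_or]
  have hc1 : ((Finset.range n).filter fun u => u = v.val + 1 ∧ u ≤ d).card =
      if v.val + 1 ≤ d then 1 else 0 := by
    split_ifs with h
    · rw [show ((Finset.range n).filter fun u => u = v.val + 1 ∧ u ≤ d) = {v.val + 1} from by
        ext u; simp; omega]
      simp
    · rw [show ((Finset.range n).filter fun u => u = v.val + 1 ∧ u ≤ d) = ∅ from by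
        ext u; simp; omega]
      simp
  have hc2 : ((Finset.range n).filter fun u => u + 1 = v.val).card =
      if 1 ≤ v.val then 1 else 0 := by
    split_ifs with h
    · rw [show ((Finset.range n).filter fun u => u + 1 = v.val) = {v.val - 1} from by
        ext u; simp; omega]
      simp
    · rw [show ((Finset.range n).filter fun u => u + 1 = v.val) = ∅ from by
        ext u; simp; omega]
      simp
  have hc3 : ((Finset.range n).filter fun u => d < u ∧ v.val ≤ 2).card =
      if v.val ≤ 2 then n - d - 1 else 0 := by
    split_ifs with h
    · rw [show ((Finset.range n).filter fun u => d < u ∧ v.val ≤ 2) =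
          (Finset.range n) \ Finset.range (d + 1) from by ext u; simp; omega]
      rw [Finset.card_sdiff_of_subset (by intro x; simp; omega)]
      simp only [Finset.card_range]
      omega
    · rw [show ((Finset.range n).filter fun u => d < u ∧ v.val ≤ 2) = ∅ from by
        ext u; simp; omega]
      simp
  have hdisj1 : Disjoint ((Finset.range n).filter fun u => u + 1 = v.val)
      ((Finset.range n).filter fun u => d < u ∧ v.val ≤ 2) := by
    rw [Finset.disjoint_left]; intro a ha hb
    simp only [Finset.mem_filter, Finset.mem_range] at ha hb
    omega
  have hdisj2 : Disjoint ((Finset.range n).filter fun u => u = v.val + 1 ∧ u ≤ d)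
      (((Finset.range n).filter fun u => u + 1 = v.val) ∪
       ((Finset.range n).filter fun u => d < u ∧ v.val ≤ 2)) := by
    rw [Finset.disjoint_left]; intro a ha hb
    simp only [Finset.mem_union, Finset.mem_filter, Finset.mem_range] at ha hb
    omega
  rw [hsplit, Finset.card_union_of_disjoint hdisj2, Finset.card_union_of_disjoint hdisj1,
    hc1, hc2, hc3]
  ring

lemma sum_boole' (s : Finset (Fin n)) (p : Fin n → Prop) [DecidablePred p] (c : ℕ) :
    ∑ v ∈ s, (if p v then c else 0) = c * (s.filter p).card := by
  rw [Finset.sum_ite, Finset.sum_const, Finset.sum_const_zero, add_zero, mul_comm]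
  rfl

lemma card_edges (hd : 2 ≤ d) (hn : d + 1 ≤ n) :
    (oreExtremalGraph n d).edgeFinset.card = d + (n - d - 1) * (n - d + 4) / 2 := by
  classical
  have hsum := SimpleGraph.sum_degrees_eq_twice_card_edges (oreExtremalGraph n d)
  set k := n - d - 1 with hk
  -- split the sum
  rw [← Finset.sum_filter_add_sum_filter_not Finset.univ (fun v : Fin n => v.val ≤ d)] at hsum
  have h1 : ∑ v ∈ Finset.univ.filter (fun v : Fin n => v.val ≤ d),
      (oreExtremalGraph n d).degree v = d + d + 3 * k := by
    rw [Finset.sum_congr rfl (fun v hv => degree_path v (by simpa using hv) hd hn)]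
    rw [Finset.sum_add_distrib, Finset.sum_add_distrib]
    rw [sum_boole' _ _ 1, sum_boole' _ _ 1, sum_boole' _ _ k]
    simp only [Finset.filter_filter]
    have e1 : (Finset.univ.filter fun v : Fin n => v.val ≤ d ∧ v.val + 1 ≤ d).card = d := by
      rw [card_filter_val (fun u => u ≤ d ∧ u + 1 ≤ d)]
      have : ((Finset.range n).filter fun u => u ≤ d ∧ u + 1 ≤ d) = Finset.range d := by
        ext u; simp; omega
      rw [this]; simp
    have e2 : (Finset.univ.filter fun v : Fin n => v.val ≤ d ∧ 1 ≤ v.val).card = d := by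
      rw [card_filter_val (fun u => u ≤ d ∧ 1 ≤ u)]
      have : ((Finset.range n).filter fun u => u ≤ d ∧ 1 ≤ u) =
          Finset.range (d + 1) \ Finset.range 1 := by
        ext u; simp; omega
      rw [this, Finset.card_sdiff_of_subset (by intro x; simp; omega)]
      simp
    have e3 : (Finset.univ.filter fun v : Fin n => v.val ≤ d ∧ v.val ≤ 2).card = 3 := by
      rw [card_filter_val (fun u => u ≤ d ∧ u ≤ 2)]
      have : ((Finset.range n).filter fun u => u ≤ d ∧ u ≤ 2) = Finset.range 3 := by
        ext u; simp; omega
      simp [this]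
    rw [e1, e2, e3]
    ring
  have h2 : ∑ v ∈ Finset.univ.filter (fun v : Fin n => ¬ v.val ≤ d),
      (oreExtremalGraph n d).degree v = k * (k + 2) := by
    rw [Finset.sum_congr rfl (fun v hv => degree_clique v (by simpa using hv) hd hn)]
    rw [Finset.sum_const, smul_eq_mul]
    have : (Finset.univ.filter fun v : Fin n => ¬ v.val ≤ d).card = k := by
      rw [card_filter_val (fun u => ¬ u ≤ d)]
      have : ((Finset.range n).filter fun u => ¬ u ≤ d) =
          Finset.range n \ Finset.range (d + 1) := by
        ext u; simp
      rw [this, Finset.card_sdiff_of_subset (by intro x; simp; omega)]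
      simp only [Finset.card_range]
      omega
    rw [this]
  rw [h1, h2] at hsum
  have hkk : n - d + 4 = k + 5 := by omega
  rw [hkk]
  have heven : ∃ m, k * (k + 5) = m + m := by
    rcases Nat.even_or_odd k with h | h
    · obtain ⟨m, hm⟩ := h
      exact ⟨m * (k + 5), by rw [hm]; ring⟩
    · obtain ⟨m, hm⟩ := h
      exact ⟨k * (m + 3), by rw [hm]; ring⟩
  obtain ⟨m, hm⟩ := heven
  have hkk2 : k * (k + 5) = k * (k + 2) + 3 * k := by ring
  omega

end OreAux

/-- For integers `d ≥ 2` and `n ≥ d + 1`, the graph `oreExtremalGraph n d`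
(a path of length `d` together with `n - d - 1` pairwise adjacent vertices each
joined to the first three vertices of the path) is a finite simple graph on `n`
vertices with diameter exactly `d` and exactly `d + (n - d - 1)(n - d + 4)/2` edges. -/
theorem ore_max_size_attained (n d : ℕ) (hd : 2 ≤ d) (hn : d + 1 ≤ n) :
    Fintype.card (Fin n) = n ∧
    (oreExtremalGraph n d).Connected ∧
    (oreExtremalGraph n d).diam = d ∧
    (oreExtremalGraph n d).edgeFinset.card = d + (n - d - 1) * (n - d + 4) / 2 := by
  refine ⟨Fintype.card_fin n, OreAux.connected hd hn, ?_, OreAux.card_edges hd hn⟩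
  rw [SimpleGraph.diam, OreAux.ediam_eq hd hn]
  simp
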